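/- There exists a self-divisible ultrafilter u on ℕ such that u/u is not self-divisible; in fact D(u/u) = {1} for any ultrafilter u containing the set S of squarefree numbers and containing pℕ \ p²ℕ for every prime p. -/
import Mathlib

/-- x·A = {x*a : a ∈ A} in ℕ+. -/
def pmul (x : ℕ+) (A : Set ℕ+) : Set ℕ+ := (x * ·) '' A

/-- xℕ, the set of positive multiples of x. -/
def mulsOf (x : ℕ+) : Set ℕ+ := {n | x ∣ n}

/-- D(u) = {x : xℕ ∈ u}. -/
def Dset (u : Ultrafilter ℕ+) : Set ℕ+ := {x | mulsOf x ∈ u}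

/-- v strongly divides u: D(u) ∈ v. -/
def SDvd (v u : Ultrafilter ℕ+) : Prop := Dset u ∈ v

/-- Membership in the quotient u/v:  A ∈ u/v iff {x : x·A ∈ u} ∈ v. -/
def quotMem (u v : Ultrafilter ℕ+) (A : Set ℕ+) : Prop := {x | pmul x A ∈ u} ∈ v

attribute [local instance] Ultrafilter.mul

/-- D(u/u) = {x : xℕ ∈ u/u}. -/
def DsetQ (u : Ultrafilter ℕ+) : Set ℕ+ := {x | quotMem u u (mulsOf x)}

lemma pmul_mulsOf (x y : ℕ+) : pmul x (mulsOf y) = mulsOf (x * y) := by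
  ext n
  constructor
  · rintro ⟨a, ⟨k, rfl⟩, rfl⟩
    exact ⟨k, (mul_assoc x y k).symm⟩
  · rintro ⟨k, rfl⟩
    exact ⟨y * k, ⟨k, rfl⟩, (mul_assoc x y k).symm⟩

lemma pmul_one (x : ℕ+) : pmul x {1} = {x} := by
  simp [pmul]

/-- Anything whose multiples are in u is squarefree, if the squarefree set is in u. -/
lemma sqfree_of_mem (u : Ultrafilter ℕ+)
    (hS : {x : ℕ+ | Squarefree (x : ℕ)} ∈ u) (x : ℕ+) (hx : mulsOf x ∈ u) :
    Squarefree (x : ℕ) := by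
  obtain ⟨n, hn1, hn2⟩ := Ultrafilter.nonempty_of_mem (u.inter_mem hx hS)
  exact hn2.squarefree_of_dvd (PNat.dvd_iff.mp hn1)

/-- Every squarefree positive integer is in Dset u. -/
lemma mem_Dset (u : Ultrafilter ℕ+)
    (hA : ∀ p : ℕ+, (p : ℕ).Prime → {n : ℕ+ | p ∣ n ∧ ¬ p ^ 2 ∣ n} ∈ u) :
    ∀ x : ℕ+, Squarefree (x : ℕ) → mulsOf x ∈ u := by
  intro x
  induction x using PNat.strongInductionOn with
  | _ x ih =>
    intro hx
    rcases eq_or_ne x 1 with rfl | hx1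
    · have : mulsOf 1 = Set.univ := by ext n; simp [mulsOf]
      rw [this]; exact Filter.univ_mem
    · have hxn1 : (x : ℕ) ≠ 1 := by
        simpa [← PNat.coe_eq_one_iff] using hx1
      have hp : ((x : ℕ).minFac).Prime := Nat.minFac_prime hxn1
      have pd : (x : ℕ).minFac ∣ (x : ℕ) := Nat.minFac_dvd _
      obtain ⟨P, hPcoe⟩ : ∃ P : ℕ+, (P : ℕ) = (x : ℕ).minFac := ⟨⟨_, hp.pos⟩, rfl⟩
      have hPx : P ∣ x := PNat.dvd_iff.mpr (hPcoe ▸ pd)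
      obtain ⟨y, hxy⟩ := hPx
      have hycoe : ((P * y : ℕ+) : ℕ) = (P : ℕ) * (y : ℕ) := by simp
      have hsq : Squarefree ((P : ℕ) * (y : ℕ)) := by
        rw [← hycoe, ← hxy]; exact hx
      have hpP : ((P : ℕ)).Prime := hPcoe ▸ hp
      have hpy : ¬ (P : ℕ) ∣ (y : ℕ) := by
        intro hdvd
        obtain ⟨k, hk⟩ := hdvd
        have : IsUnit ((P : ℕ)) := hsq (P : ℕ) ⟨k, by rw [hk]; ring⟩
        exact hpP.not_isUnit this
      have hysq : Squarefree (y : ℕ) := hsq.of_mul_right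
      have hylt : y < x := by
        rw [hxy, ← PNat.coe_lt_coe, hycoe]
        calc (y : ℕ) = 1 * (y : ℕ) := (one_mul _).symm
        _ < (P : ℕ) * (y : ℕ) := (Nat.mul_lt_mul_right y.pos).2 (by have := hpP.two_le; omega)
      have hy : mulsOf y ∈ u := ih y hylt hysq
      have hAP := hA P hpP
      rw [hxy]
      refine u.toFilter.mem_of_superset (u.inter_mem hAP hy) ?_
      rintro n ⟨⟨hPn, -⟩, hyn⟩
      have hcop : Nat.Coprime (P : ℕ) (y : ℕ) := (hpP.coprime_iff_not_dvd).mpr hpy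
      have : (P : ℕ) * (y : ℕ) ∣ (n : ℕ) :=
        hcop.mul_dvd_of_dvd_of_dvd (PNat.dvd_iff.mp hPn) (PNat.dvd_iff.mp hyn)
      exact PNat.dvd_iff.mpr (by rwa [hycoe])

lemma dsetQ_char (u : Ultrafilter ℕ+) (x : ℕ+) :
    x ∈ DsetQ u ↔ {y : ℕ+ | mulsOf (y * x) ∈ u} ∈ u := by
  unfold DsetQ quotMem
  simp [pmul_mulsOf]

/-- The main DsetQ computation. -/
lemma dsetQ_eq (u : Ultrafilter ℕ+)
    (hS : {x : ℕ+ | Squarefree (x : ℕ)} ∈ u)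
    (hA : ∀ p : ℕ+, (p : ℕ).Prime → {n : ℕ+ | p ∣ n ∧ ¬ p ^ 2 ∣ n} ∈ u) :
    DsetQ u = {1} := by
  ext x
  rw [dsetQ_char, Set.mem_singleton_iff]
  constructor
  · intro h
    by_contra hx1
    have hxn1 : (x : ℕ) ≠ 1 := by simpa [← PNat.coe_eq_one_iff] using hx1
    have hp : ((x : ℕ).minFac).Prime := Nat.minFac_prime hxn1
    have pd : (x : ℕ).minFac ∣ (x : ℕ) := Nat.minFac_dvd _
    obtain ⟨P, hPcoe⟩ : ∃ P : ℕ+, (P : ℕ) = (x : ℕ).minFac := ⟨⟨_, hp.pos⟩, rfl⟩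
    have hpP : ((P : ℕ)).Prime := hPcoe ▸ hp
    have hAP := hA P hpP
    obtain ⟨y, hy1, hy2, -⟩ := Ultrafilter.nonempty_of_mem (u.inter_mem h hAP)
    have hsq : Squarefree ((y * x : ℕ+) : ℕ) := sqfree_of_mem u hS _ hy1
    have hpy : (P : ℕ) ∣ (y : ℕ) := PNat.dvd_iff.mp hy2
    have hpp : (P : ℕ) * (P : ℕ) ∣ ((y * x : ℕ+) : ℕ) := by
      rw [PNat.mul_coe]
      exact mul_dvd_mul hpy (hPcoe ▸ pd)
    exact hpP.not_isUnit (hsq (P : ℕ) hpp)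
  · rintro rfl
    have : {y : ℕ+ | mulsOf (y * 1) ∈ u} = {y : ℕ+ | mulsOf y ∈ u} := by simp
    rw [this]
    exact u.toFilter.mem_of_superset hS (fun y hy => mem_Dset u hA y hy)

lemma sqfree_prod (F : Finset ℕ+) (h : ∀ p ∈ F, (p : ℕ).Prime) :
    Squarefree ((∏ p ∈ F, p : ℕ+) : ℕ) := by
  induction F using Finset.induction with
  | empty => simp [squarefree_one]
  | @insert a F ha ih =>
    rw [Finset.prod_insert ha, PNat.mul_coe]
    have hap : ((a : ℕ)).Prime := h a (Finset.mem_insert_self a F)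
    rcases h with _
    have hF : ∀ p ∈ F, ((p : ℕ)).Prime := fun p hp => by
      exact ‹∀ p ∈ insert a F, ((p : ℕ)).Prime› p (Finset.mem_insert_of_mem hp)
    have hnd : ¬ (a : ℕ) ∣ ((∏ p ∈ F, p : ℕ+) : ℕ) := by
      intro hd
      have hcoe : ((∏ p ∈ F, p : ℕ+) : ℕ) = ∏ p ∈ F, (p : ℕ) :=
        map_prod PNat.coeMonoidHom _ _
      rw [hcoe, Prime.dvd_finset_prod_iff hap.prime] at hd
      obtain ⟨q, hqF, hq⟩ := hd
      have := (Nat.prime_dvd_prime_iff_eq hap (hF q hqF)).mp hq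
      exact ha (PNat.coe_injective this ▸ hqF)
    rw [Nat.squarefree_mul (hap.coprime_iff_not_dvd.mpr hnd)]
    exact ⟨hap.squarefree, ih hF⟩

theorem stmt10 :
    (∃ u : Ultrafilter ℕ+, Dset u ∈ u ∧ ¬ quotMem u u (DsetQ u)) ∧
    (∀ u : Ultrafilter ℕ+, {x : ℕ+ | Squarefree (x : ℕ)} ∈ u →
      (∀ p : ℕ+, (p : ℕ).Prime → {n : ℕ+ | p ∣ n ∧ ¬ p ^ 2 ∣ n} ∈ u) →
      DsetQ u = {1}) := by
  have hmain : ∃ u : Ultrafilter ℕ+, {x : ℕ+ | Squarefree (x : ℕ)} ∈ u ∧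
      ∀ p : ℕ+, (p : ℕ).Prime → {n : ℕ+ | p ∣ n ∧ ¬ p ^ 2 ∣ n} ∈ u := by
    set S : Set ℕ+ := {x : ℕ+ | Squarefree (x : ℕ)} with hSdef
    set A : ℕ+ → Set ℕ+ := fun p => {n : ℕ+ | p ∣ n ∧ ¬ p ^ 2 ∣ n} with hAdef
    set g : Set (Set ℕ+) := insert S {B | ∃ p : ℕ+, (p : ℕ).Prime ∧ B = A p} with hgdef
    have hne : (Filter.generate g).NeBot := by
      rw [Filter.generate_neBot_iff]
      intro t hts ht
      set ps : Set ℕ+ := {p : ℕ+ | (p : ℕ).Prime ∧ A p ∈ t} with hpsdef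
      have hself : ∀ p : ℕ+, (p : ℕ).Prime → p ∈ A p := by
        intro p hp
        refine ⟨dvd_refl p, fun hd => ?_⟩
        have h1 := PNat.dvd_iff.mp hd
        rw [PNat.pow_coe] at h1
        have h2 := Nat.le_of_dvd p.pos h1
        nlinarith [hp.two_le]
      have hpsfin : ps.Finite := by
        apply Set.Finite.of_finite_image (f := A)
        · exact ht.subset (by rintro B ⟨p, ⟨hp1, hp2⟩, rfl⟩; exact hp2)
        · rintro p ⟨hp, -⟩ q ⟨hq, -⟩ hpq
          have h1 : p ∈ A q := hpq ▸ hself p hp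
          exact PNat.coe_injective
            ((Nat.prime_dvd_prime_iff_eq hq hp).mp (PNat.dvd_iff.mp h1.1)).symm
      set N : ℕ+ := ∏ p ∈ hpsfin.toFinset, p with hNdef
      have hFprime : ∀ p ∈ hpsfin.toFinset, ((p : ℕ)).Prime := by
        intro p hp
        exact (hpsfin.mem_toFinset.mp hp).1
      have hNsq : Squarefree (N : ℕ) := sqfree_prod _ hFprime
      refine ⟨N, ?_⟩
      intro s hs
      rcases hts hs with rfl | ⟨p, hp, rfl⟩
      · exact hNsq
      · have hpmem : p ∈ hpsfin.toFinset := hpsfin.mem_toFinset.mpr ⟨hp, hs⟩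
        have hdvd : p ∣ N := Finset.dvd_prod_of_mem _ hpmem
        refine ⟨hdvd, fun hd => ?_⟩
        have h1 := PNat.dvd_iff.mp hd
        rw [PNat.pow_coe, pow_two] at h1
        exact (hp.not_isUnit) (hNsq (p : ℕ) h1)
    obtain ⟨u, hu⟩ := Ultrafilter.exists_le (Filter.generate g)
    refine ⟨u, hu (Filter.mem_generate_of_mem (Set.mem_insert _ _)), fun p hp => ?_⟩
    exact hu (Filter.mem_generate_of_mem (Set.mem_insert_of_mem _ ⟨p, hp, rfl⟩))
  constructor
  · obtain ⟨u, hS, hA⟩ := hmain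
    refine ⟨u, ?_, ?_⟩
    · exact u.toFilter.mem_of_superset hS (fun y hy => mem_Dset u hA y hy)
    · rw [dsetQ_eq u hS hA]
      unfold quotMem
      simp only [pmul_one]
      have hempty : {x : ℕ+ | {x} ∈ u} = ∅ := by
        ext x
        simp only [Set.mem_setOf_eq, Set.mem_empty_iff_false, iff_false]
        intro hx
        obtain ⟨q, hq1, hq2⟩ := Nat.exists_infinite_primes ((x : ℕ) + 1)
        obtain ⟨Q, hQcoe⟩ : ∃ Q : ℕ+, (Q : ℕ) = q := ⟨⟨q, hq2.pos⟩, rfl⟩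
        have hAQ := hA Q (hQcoe ▸ hq2)
        obtain ⟨y, hy1, hy2, -⟩ := Ultrafilter.nonempty_of_mem (u.inter_mem hx hAQ)
        rcases hy1 with rfl
        have := Nat.le_of_dvd y.pos (PNat.dvd_iff.mp hy2)
        omega
      rw [hempty]
      exact u.toFilter.empty_notMem
  · intro u hS hA
    exact dsetQ_eq u hS hA
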